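/- arXiv:1809.06946 — 3 statements merged into one kernel-verified Lean document; each statement's English description precedes it below -/
import Mathlib

section
/- For m ≥ 1 and n ≥ 2, the forgetful map g : PConfₙ₊₁(D^m) → PConfₙ(D^m), (p₀,p₁,…,pₙ) ↦ (p₁,…,pₙ), admits a continuous section. Explicitly, setting d₁ = min{‖p_k − p₁‖ : k ≠ 1} and v = p₂ − p₁, the map (p₁,…,pₙ) ↦ (p₁ + (d₁ / (2‖v‖)) v, p₁, …, pₙ) is such a section. -/
open Metric Function

noncomputable section

abbrev E (m : ℕ) := EuclideanSpace ℝ (Fin m)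
def Dball (m : ℕ) : Set (E m) := Metric.closedBall 0 1
def PConf (m n : ℕ) : Set (Fin n → E m) :=
  {p | (∀ i, p i ∈ Dball m) ∧ Function.Injective p}

/-- The minimal distance `d₁ = min {‖p_k − p₁‖ : k ≠ 1}` from the first point to the
others (here the first point has index `0`, and there are `n + 2 ≥ 2` points). -/
def minDist {m n : ℕ} (p : Fin (n + 2) → E m) : ℝ :=
  (Finset.univ.filter (fun k : Fin (n + 2) => k ≠ 0)).inf'
    ⟨1, by simp⟩ (fun k => ‖p k - p 0‖)

/-- The added point `p₁ + (d₁/(2‖v‖)) v` with `v = p₂ − p₁`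
(indices `0` and `1` play the roles of `p₁` and `p₂`). -/
def addedPoint {m n : ℕ} (p : Fin (n + 2) → E m) : E m :=
  p 0 + (minDist p / (2 * ‖p 1 - p 0‖)) • (p 1 - p 0)


lemma minDist_le {m n : ℕ} (p : Fin (n + 2) → E m) {k : Fin (n + 2)} (hk : k ≠ 0) :
    minDist p ≤ ‖p k - p 0‖ :=
  Finset.inf'_le _ (by simp [hk])

lemma minDist_pos {m n : ℕ} {p : Fin (n + 2) → E m} (hp : Function.Injective p) :
    0 < minDist p := by
  refine (Finset.lt_inf'_iff _).2 ?_
  intro k hk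
  simp only [Finset.mem_filter] at hk
  rw [norm_sub_pos_iff]
  exact fun h => hk.2 (hp h)

lemma addedPoint_mem {m n : ℕ} {p : Fin (n + 2) → E m} (hp : p ∈ PConf m (n + 2)) :
    addedPoint p ∈ Dball m := by
  have hv : (0:ℝ) < ‖p 1 - p 0‖ := by
    rw [norm_sub_pos_iff]; exact fun h => one_ne_zero (hp.2 h)
  set t : ℝ := minDist p / (2 * ‖p 1 - p 0‖) with ht
  have ht0 : 0 ≤ t := div_nonneg (minDist_pos hp.2).le (by positivity)
  have ht1 : t ≤ 1 := by
    rw [ht, div_le_one (by positivity)]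
    have := minDist_le p (k := 1) (by simp)
    linarith
  have : addedPoint p = (1 - t) • p 0 + t • p 1 := by
    rw [addedPoint]
    module
  rw [this]
  have hc : Convex ℝ (Dball m) := convex_closedBall 0 1
  exact hc (hp.1 0) (hp.1 1) (by linarith) ht0 (by ring)

lemma addedPoint_ne {m n : ℕ} {p : Fin (n + 2) → E m} (hp : p ∈ PConf m (n + 2))
    (k : Fin (n + 2)) : addedPoint p ≠ p k := by
  have hv : (0:ℝ) < ‖p 1 - p 0‖ := by
    rw [norm_sub_pos_iff]; exact fun h => one_ne_zero (hp.2 h)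
  have hd : 0 < minDist p := minDist_pos hp.2
  have hq0 : ‖addedPoint p - p 0‖ = minDist p / 2 := by
    rw [addedPoint]
    simp only [add_sub_cancel_left, norm_smul]
    rw [Real.norm_eq_abs, abs_of_nonneg (by positivity)]
    field_simp
  rcases eq_or_ne k 0 with rfl | hk
  · intro h
    rw [h] at hq0
    simp at hq0
    linarith
  · intro h
    have hle := minDist_le p hk
    have htri : ‖p k - p 0‖ ≤ ‖p k - addedPoint p‖ + ‖addedPoint p - p 0‖ := by
      simpa [dist_eq_norm] using dist_triangle (p k) (addedPoint p) (p 0)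
    rw [h] at hq0
    have : ‖p k - p k‖ = 0 := by simp
    rw [show addedPoint p = p k from h] at htri
    simp only [this] at htri
    rw [hq0] at htri
    simp at htri
    linarith

/-- For `m ≥ 1` and any number `n + 2 ≥ 2` of points, the forgetful map
`PConfₙ₊₁(D^m) → PConfₙ(D^m)` admits a continuous section, given explicitly by
adding the point `p₁ + (d₁/(2‖v‖)) v`. -/
theorem ordered_section (m n : ℕ) (hm : 1 ≤ m) :
    ∃ s : ↥(PConf m (n + 2)) → ↥(PConf m (n + 3)),
      Continuous s ∧
      (∀ p : ↥(PConf m (n + 2)),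
        (s p : Fin (n + 3) → E m) = Fin.cons (addedPoint (p : Fin (n + 2) → E m)) p) ∧
      (∀ p : ↥(PConf m (n + 2)),
        (s p : Fin (n + 3) → E m) ∘ Fin.succ = (p : Fin (n + 2) → E m)) := by
  refine ⟨fun p => ⟨Fin.cons (addedPoint (p : Fin (n + 2) → E m)) p, ?_, ?_⟩, ?_, ?_, ?_⟩
  · intro i
    refine Fin.cases ?_ ?_ i
    · exact addedPoint_mem p.2
    · intro j; simpa using p.2.1 j
  · refine Fin.cons_injective_of_injective ?_ p.2.2
    rintro ⟨k, hk⟩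
    exact addedPoint_ne p.2 k hk.symm
  · apply Continuous.subtype_mk
    have hev : ∀ k : Fin (n + 2), Continuous fun p : ↥(PConf m (n + 2)) => (p : Fin (n + 2) → E m) k :=
      fun k => (continuous_apply k).comp continuous_subtype_val
    have hmin : Continuous fun p : ↥(PConf m (n + 2)) => minDist (p : Fin (n + 2) → E m) := by
      apply Continuous.finset_inf'_apply
      intro k _
      exact ((hev k).sub (hev 0)).norm
    have hvnorm : Continuous fun p : ↥(PConf m (n + 2)) =>
        ‖(p : Fin (n + 2) → E m) 1 - (p : Fin (n + 2) → E m) 0‖ :=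
      ((hev 1).sub (hev 0)).norm
    have hvne : ∀ p : ↥(PConf m (n + 2)),
        (2 * ‖(p : Fin (n + 2) → E m) 1 - (p : Fin (n + 2) → E m) 0‖) ≠ 0 := by
      intro p
      have : (0:ℝ) < ‖(p : Fin (n + 2) → E m) 1 - (p : Fin (n + 2) → E m) 0‖ := by
        rw [norm_sub_pos_iff]; exact fun h => one_ne_zero (p.2.2 h)
      positivity
    have hadd : Continuous fun p : ↥(PConf m (n + 2)) =>
        addedPoint (p : Fin (n + 2) → E m) := by
      unfold addedPoint
      exact (hev 0).add (((hmin.div (continuous_const.mul hvnorm) hvne).smul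
        ((hev 1).sub (hev 0))))
    refine continuous_pi fun i => ?_
    refine Fin.cases ?_ ?_ i
    · simpa using hadd
    · intro j; simpa using hev j
  · intro p; rfl
  · intro p; ext j; simp
end
end

section
/- Let g : PConfₙ₊₁(D^m) → PConfₙ(D^m) be the map forgetting the 0th point, which is Σₙ-equivariant for the action permuting the last n coordinates, and let ḡ : PConfₙ₊₁(D^m)/Σₙ → Confₙ(D^m) be the induced map of quotients. If ḡ admits a continuous section, then g admits a Σₙ-equivariant continuous section. -/
open Metric Function

noncomputable section

/-- The ordered configuration space of `n + 1` points `(p₀, p₁, …, pₙ)` in the closed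
ball, encoded as a distinguished point `p₀` together with the remaining configuration. -/
def TotConf (m n : ℕ) : Set (E m × (Fin n → E m)) :=
  {x | x.1 ∈ Dball m ∧ (∀ i, x.2 i ∈ Dball m) ∧ Function.Injective x.2 ∧ ∀ i, x.1 ≠ x.2 i}

/-- The map forgetting the distinguished `0`th point. -/
def forget (m n : ℕ) (x : ↥(TotConf m n)) : ↥(PConf m n) :=
  ⟨x.1.2, x.2.2.1, x.2.2.2.1⟩

instance (m n : ℕ) : SMul (Equiv.Perm (Fin n)) ↥(PConf m n) :=
  ⟨fun τ p => ⟨(p : Fin n → E m) ∘ ⇑τ⁻¹,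
    fun i => p.2.1 _, p.2.2.comp (Equiv.injective _)⟩⟩

/-- `Σₙ` acts on ordered configurations by permuting the indices. -/
instance (m n : ℕ) : MulAction (Equiv.Perm (Fin n)) ↥(PConf m n) where
  one_smul p := Subtype.ext (by funext i; show (p : Fin n → E m) _ = _; simp)
  mul_smul τ ρ p := Subtype.ext (by
    funext i; show (p : Fin n → E m) _ = (p : Fin n → E m) _; simp [mul_inv_rev])

instance (m n : ℕ) : SMul (Equiv.Perm (Fin n)) ↥(TotConf m n) :=
  ⟨fun τ x => ⟨(x.1.1, x.1.2 ∘ ⇑τ⁻¹),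
    ⟨x.2.1, fun i => x.2.2.1 _, x.2.2.2.1.comp (Equiv.injective _),
      fun i => x.2.2.2.2 _⟩⟩⟩

/-- `Σₙ` acts on configurations of `n + 1` points by permuting the last `n` indices. -/
instance (m n : ℕ) : MulAction (Equiv.Perm (Fin n)) ↥(TotConf m n) where
  one_smul x := Subtype.ext (by
    refine Prod.ext rfl ?_
    funext i; show (x : E m × (Fin n → E m)).2 _ = _; simp)
  mul_smul τ ρ x := Subtype.ext (by
    refine Prod.ext rfl ?_
    funext i
    show (x : E m × (Fin n → E m)).2 _ = (x : E m × (Fin n → E m)).2 _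
    simp [mul_inv_rev])

/-- The unordered configuration space `Confₙ(D^m) = PConfₙ(D^m)/Σₙ`. -/
abbrev ConfQ (m n : ℕ) := Quotient (MulAction.orbitRel (Equiv.Perm (Fin n)) ↥(PConf m n))

/-- The quotient `PConfₙ₊₁(D^m)/Σₙ` by the action on the last `n` coordinates. -/
abbrev TotQ (m n : ℕ) := Quotient (MulAction.orbitRel (Equiv.Perm (Fin n)) ↥(TotConf m n))

/-- The induced map `ḡ : PConfₙ₊₁(D^m)/Σₙ → Confₙ(D^m)`. -/
def gbar (m n : ℕ) : TotQ m n → ConfQ m n :=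
  Quotient.map (forget m n) (by
    intro a b hab
    obtain ⟨τ, hτ⟩ := hab
    exact ⟨τ, by rw [← hτ]; rfl⟩)

-- aux lemmas
variable {m n : ℕ}

lemma smul_val_P (τ : Equiv.Perm (Fin n)) (p : ↥(PConf m n)) :
    ((τ • p : ↥(PConf m n)) : Fin n → E m) = (p : Fin n → E m) ∘ ⇑τ⁻¹ := rfl

lemma smul_val_T (τ : Equiv.Perm (Fin n)) (x : ↥(TotConf m n)) :
    ((τ • x : ↥(TotConf m n)) : E m × (Fin n → E m)) =
      ((x : E m × (Fin n → E m)).1, (x : E m × (Fin n → E m)).2 ∘ ⇑τ⁻¹) := rfl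

lemma forget_smul (τ : Equiv.Perm (Fin n)) (x : ↥(TotConf m n)) :
    forget m n (τ • x) = τ • forget m n x := rfl

lemma free_P {τ : Equiv.Perm (Fin n)} {p : ↥(PConf m n)} (h : τ • p = p) : τ = 1 := by
  have h2 : (p : Fin n → E m) ∘ ⇑τ⁻¹ = (p : Fin n → E m) := congrArg Subtype.val h
  ext i
  have := congrFun h2 (τ i)
  simp only [comp_apply, ← Equiv.Perm.mul_apply, inv_mul_cancel, Equiv.Perm.one_apply] at this
  have h3 := p.2.2 this
  simp only [Equiv.Perm.one_apply]
  exact congrArg Fin.val h3.symm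

lemma dist_smul_le_P (τ : Equiv.Perm (Fin n)) (p q : ↥(PConf m n)) :
    dist (τ • p) (τ • q) ≤ dist p q := by
  rw [Subtype.dist_eq, Subtype.dist_eq]
  refine dist_pi_le_iff dist_nonneg |>.2 fun i => ?_
  exact dist_le_pi_dist (p : Fin n → E m) (q : Fin n → E m) (τ⁻¹ i)

lemma dist_forget_le (x y : ↥(TotConf m n)) :
    dist (forget m n x) (forget m n y) ≤ dist x y := by
  rw [Subtype.dist_eq, Subtype.dist_eq, Prod.dist_eq]
  exact le_max_right _ _

instance : ContinuousConstSMul (Equiv.Perm (Fin n)) ↥(TotConf m n) := by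
  constructor
  intro τ
  apply Continuous.subtype_mk
  refine Continuous.prodMk ?_ ?_
  · exact continuous_fst.comp continuous_subtype_val
  · exact continuous_pi fun i =>
      (continuous_apply (τ⁻¹ i)).comp (continuous_snd.comp continuous_subtype_val)

lemma key_exists (m n : ℕ) (sbar : ConfQ m n → TotQ m n)
    (hsec : ∀ q, gbar m n (sbar q) = q) (p : ↥(PConf m n)) :
    ∃! x : ↥(TotConf m n),
      Quotient.mk (MulAction.orbitRel (Equiv.Perm (Fin n)) ↥(TotConf m n)) x =
        sbar (Quotient.mk (MulAction.orbitRel (Equiv.Perm (Fin n)) ↥(PConf m n)) p) ∧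
      forget m n x = p := by
  obtain ⟨x₀, hx₀⟩ := Quotient.exists_rep
    (sbar (Quotient.mk (MulAction.orbitRel (Equiv.Perm (Fin n)) ↥(PConf m n)) p))
  have hg := hsec (Quotient.mk (MulAction.orbitRel (Equiv.Perm (Fin n)) ↥(PConf m n)) p)
  rw [← hx₀] at hg
  have hg' : Quotient.mk (MulAction.orbitRel (Equiv.Perm (Fin n)) ↥(PConf m n))
      (forget m n x₀) = Quotient.mk _ p := hg
  obtain ⟨τ, hτ⟩ : ∃ τ : Equiv.Perm (Fin n), τ • p = forget m n x₀ := Quotient.exact hg'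
  refine ⟨τ⁻¹ • x₀, ⟨?_, ?_⟩, ?_⟩
  · rw [← hx₀]
    first
    | exact Quotient.sound ⟨τ, smul_inv_smul τ x₀⟩
    | exact Quotient.sound ⟨τ⁻¹, rfl⟩
  · rw [forget_smul, ← hτ, ← mul_smul, inv_mul_cancel, one_smul]
  · rintro y ⟨hy1, hy2⟩
    have hmk : Quotient.mk (MulAction.orbitRel (Equiv.Perm (Fin n)) ↥(TotConf m n)) y =
        Quotient.mk _ (τ⁻¹ • x₀) := by
      rw [hy1, ← hx₀]
      first
      | exact Quotient.sound ⟨τ, smul_inv_smul τ x₀⟩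
      | exact Quotient.sound ⟨τ⁻¹, rfl⟩
    obtain ⟨σ, hσ⟩ : ∃ σ : Equiv.Perm (Fin n), σ • (τ⁻¹ • x₀) = y := Quotient.exact hmk
    have hf : forget m n (τ⁻¹ • x₀) = p := by
      rw [forget_smul, ← hτ, ← mul_smul, inv_mul_cancel, one_smul]
    have hσp : σ • p = p := by
      rw [← hf, ← forget_smul, hσ, hy2, ← hf]
    have : σ = 1 := free_P hσp
    rw [← hσ, this, one_smul]

/-- If `ḡ : PConfₙ₊₁(D^m)/Σₙ → Confₙ(D^m)` admits a continuous section, then the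
`Σₙ`-equivariant forgetful map `g : PConfₙ₊₁(D^m) → PConfₙ(D^m)` admits a
`Σₙ`-equivariant continuous section. -/
theorem equivariant_section_of_quotient_section (m n : ℕ) (hm : 1 ≤ m) (hn : 1 ≤ n)
    (hsec : ∃ sbar : ConfQ m n → TotQ m n,
      Continuous sbar ∧ ∀ q, gbar m n (sbar q) = q) :
    ∃ s : ↥(PConf m n) → ↥(TotConf m n),
      Continuous s ∧ (∀ p, forget m n (s p) = p) ∧
      ∀ (τ : Equiv.Perm (Fin n)) (p : ↥(PConf m n)), s (τ • p) = τ • s p := by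
  obtain ⟨sbar, hsbar_cont, hsbar_sec⟩ := hsec
  set mkT := Quotient.mk (MulAction.orbitRel (Equiv.Perm (Fin n)) ↥(TotConf m n)) with hmkT
  set mkP := Quotient.mk (MulAction.orbitRel (Equiv.Perm (Fin n)) ↥(PConf m n)) with hmkP
  have key := key_exists m n sbar hsbar_sec
  let s : ↥(PConf m n) → ↥(TotConf m n) := fun p => (key p).choose
  have hs1 : ∀ p, mkT (s p) = sbar (mkP p) := fun p => (key p).choose_spec.1.1
  have hs2 : ∀ p, forget m n (s p) = p := fun p => (key p).choose_spec.1.2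
  have hsu : ∀ p y, mkT y = sbar (mkP p) → forget m n y = p → y = s p :=
    fun p y h1 h2 => (key p).choose_spec.2 y ⟨h1, h2⟩
  refine ⟨s, ?_, hs2, ?_⟩
  · -- continuity
    rw [Metric.continuous_iff]
    intro p ε hε
    -- separation constant at p
    obtain ⟨δ, hδpos, hδ⟩ : ∃ δ > 0, ∀ τ : Equiv.Perm (Fin n), τ ≠ 1 → δ ≤ dist p (τ • p) := by
      by_cases hS : ((Finset.univ.erase (1 : Equiv.Perm (Fin n)))).Nonempty
      · refine ⟨Finset.inf' _ hS (fun τ => dist p (τ • p)), ?_,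
          fun τ hτ => Finset.inf'_le _ (Finset.mem_erase.2 ⟨hτ, Finset.mem_univ τ⟩)⟩
        rw [gt_iff_lt, Finset.lt_inf'_iff]
        intro τ hτ
        have hτ1 : τ ≠ 1 := (Finset.mem_erase.1 hτ).1
        refine dist_pos.2 fun h => hτ1 (free_P h.symm)
      · exact ⟨1, one_pos, fun τ hτ =>
          absurd ⟨τ, Finset.mem_erase.2 ⟨hτ, Finset.mem_univ τ⟩⟩ hS⟩
    set ε' := min ε (δ / 2) with hε'def
    have hε' : 0 < ε' := lt_min hε (by linarith)
    -- the open set O in TotQ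
    have hopen : IsOpen (mkT '' Metric.ball (s p) ε') :=
      isOpenMap_quotient_mk'_mul _ Metric.isOpen_ball
    have hfcont : Continuous fun p' : ↥(PConf m n) => sbar (mkP p') :=
      hsbar_cont.comp continuous_quotient_mk'
    have hmem : sbar (mkP p) ∈ mkT '' Metric.ball (s p) ε' :=
      ⟨s p, Metric.mem_ball_self hε', (hs1 p)⟩
    have hpre : IsOpen ((fun p' : ↥(PConf m n) => sbar (mkP p')) ⁻¹' (mkT '' Metric.ball (s p) ε')) :=
      hopen.preimage hfcont
    obtain ⟨η₁, hη₁pos, hη₁⟩ := Metric.isOpen_iff.1 hpre p hmem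
    refine ⟨min η₁ (δ / 2), lt_min hη₁pos (by linarith), fun p' hp' => ?_⟩
    have hp'1 : dist p' p < η₁ := lt_of_lt_of_le hp' (min_le_left _ _)
    have hp'2 : dist p' p < δ / 2 := lt_of_lt_of_le hp' (min_le_right _ _)
    obtain ⟨y, hyball, hymk⟩ := hη₁ hp'1
    -- y is in ball (s p) ε' with mkT y = sbar (mkP p')
    have hymk' : mkT y = sbar (mkP p') := hymk
    have hgb : mkP (forget m n y) = mkP p' := by
      have h := hsbar_sec (mkP p')
      rw [← hymk'] at h
      exact h
    obtain ⟨τ, hτ⟩ : ∃ τ : Equiv.Perm (Fin n), τ • p' = forget m n y := Quotient.exact hgb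
    have hd1 : dist p (forget m n y) < δ / 2 := by
      have h0 : dist (forget m n (s p)) (forget m n y) ≤ dist (s p) y := dist_forget_le _ _
      rw [hs2 p] at h0
      calc dist p (forget m n y) ≤ dist (s p) y := h0
        _ < ε' := by rw [dist_comm]; exact Metric.mem_ball.1 hyball
        _ ≤ δ / 2 := min_le_right _ _
    have hd2 : dist (forget m n y) (τ • p) < δ / 2 := by
      rw [← hτ]
      calc dist (τ • p') (τ • p) ≤ dist p' p := dist_smul_le_P τ p' p
        _ < δ / 2 := hp'2
    have hτ1 : τ = 1 := by
      by_contra hne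
      have := hδ τ hne
      have h3 : dist p (τ • p) < δ := by
        calc dist p (τ • p) ≤ dist p (forget m n y) + dist (forget m n y) (τ • p) :=
          dist_triangle _ _ _
          _ < δ / 2 + δ / 2 := add_lt_add hd1 hd2
          _ = δ := by ring
      linarith
    have hfy : forget m n y = p' := by rw [← hτ, hτ1, one_smul]
    have hy : y = s p' := hsu p' y hymk hfy
    calc dist (s p') (s p) = dist y (s p) := by rw [hy]
      _ < ε' := by rw [Metric.mem_ball] at hyball; exact hyball
      _ ≤ ε := min_le_left _ _
  · -- equivariance
    intro τ p
    refine (hsu (τ • p) (τ • s p) ?_ ?_).symm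
    · have h1 : mkT (τ • s p) = mkT (s p) := by
        first
        | exact Quotient.sound ⟨τ⁻¹, inv_smul_smul τ (s p)⟩
        | exact Quotient.sound ⟨τ, rfl⟩
      have h2 : mkP (τ • p) = mkP p := by
        first
        | exact Quotient.sound ⟨τ⁻¹, inv_smul_smul τ p⟩
        | exact Quotient.sound ⟨τ, rfl⟩
      rw [h1, h2, hs1 p]
    · rw [forget_smul, hs2 p]
end
end

section
/- For m ≥ 1, every continuous section of the forgetful map g : PConf₃(D^m) → PConf₂(D^m) is homotopic, through sections, to the midpoint section M(p₁,p₂) = ((p₁+p₂)/2, p₁, p₂); moreover if the section is Σ₂-equivariant then the homotopy can be taken through Σ₂-equivariant sections. -/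
open Metric Function unitInterval

noncomputable section

/-- The `Σ₂`-action swapping the two points of a configuration. -/
def swap2 (m : ℕ) (p : ↥(PConf m 2)) : ↥(PConf m 2) :=
  ⟨(p : Fin 2 → E m) ∘ Equiv.swap 0 1,
    fun i => p.2.1 _, p.2.2.comp (Equiv.injective _)⟩

/-- The corresponding `Σ₂`-action on three-point configurations, swapping the last
two points and fixing the added point `p₀`. -/
def swap3 (m : ℕ) (q : ↥(PConf m 3)) : ↥(PConf m 3) :=
  ⟨(q : Fin 3 → E m) ∘ Equiv.swap 1 2,
    fun i => q.2.1 _, q.2.2.comp (Equiv.injective _)⟩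

namespace MidSecAux

open scoped RealInnerProductSpace

variable {m : ℕ}

/-! ### Basic data attached to a two-point configuration -/

def P0 (p : ↥(PConf m 2)) : E m := (p : Fin 2 → E m) 0
def P1 (p : ↥(PConf m 2)) : E m := (p : Fin 2 → E m) 1

lemma norm_coord_le (p : ↥(PConf m 2)) (i : Fin 2) : ‖(p : Fin 2 → E m) i‖ ≤ 1 := by
  have := p.2.1 i
  simpa [Dball, Metric.mem_closedBall, dist_zero_right] using this

lemma normP0_le (p : ↥(PConf m 2)) : ‖P0 p‖ ≤ 1 := norm_coord_le p 0
lemma normP1_le (p : ↥(PConf m 2)) : ‖P1 p‖ ≤ 1 := norm_coord_le p 1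

lemma Pne (p : ↥(PConf m 2)) : P0 p ≠ P1 p := by
  intro h
  have : (0 : Fin 2) = 1 := p.2.2 h
  exact absurd this (by decide)

def Mx (p : ↥(PConf m 2)) : ℝ := max ‖P0 p‖ ‖P1 p‖

lemma Mx_pos (p : ↥(PConf m 2)) : 0 < Mx p := by
  rcases eq_or_ne (P0 p) 0 with h | h
  · have h1 : P1 p ≠ 0 := by
      intro h1; exact Pne p (by rw [h, h1])
    exact lt_max_iff.2 (Or.inr (norm_pos_iff.2 h1))
  · exact lt_max_iff.2 (Or.inl (norm_pos_iff.2 h))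

lemma Mx_ne (p : ↥(PConf m 2)) : Mx p ≠ 0 := (Mx_pos p).ne'

lemma Mx_le_one (p : ↥(PConf m 2)) : Mx p ≤ 1 := max_le (normP0_le p) (normP1_le p)

lemma one_le_invMx (p : ↥(PConf m 2)) : 1 ≤ (Mx p)⁻¹ :=
  (one_le_inv_iff₀).2 ⟨Mx_pos p, Mx_le_one p⟩

/-! ### The expansion ratio `F` -/

def F (x y : E m) : ℝ := 2 * ⟪x, x - y⟫ / ‖x - y‖ ^ 2

lemma normsq_sub_pos {x y : E m} (hxy : x ≠ y) : 0 < ‖x - y‖ ^ 2 := by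
  have h : x - y ≠ 0 := sub_ne_zero.2 hxy
  have := norm_pos_iff.2 h
  positivity

lemma F_ge_one {x y : E m} (h : ‖y‖ ≤ ‖x‖) (hxy : x ≠ y) : 1 ≤ F x y := by
  have hd := normsq_sub_pos hxy
  rw [F, le_div_iff₀ hd]
  have h2 : ‖y‖ ^ 2 ≤ ‖x‖ ^ 2 := by nlinarith [norm_nonneg y]
  have hexp : ‖x - y‖ ^ 2 = ‖x‖ ^ 2 - 2 * ⟪x, y⟫ + ‖y‖ ^ 2 := norm_sub_sq_real x y
  have hin : ⟪x, x - y⟫ = ‖x‖ ^ 2 - ⟪x, y⟫ := by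
    rw [inner_sub_right, real_inner_self_eq_norm_sq]
  nlinarith

lemma F_eq_one {x y : E m} (h : ‖x‖ = ‖y‖) (hxy : x ≠ y) : F x y = 1 := by
  have hd := normsq_sub_pos hxy
  rw [F, div_eq_one_iff_eq hd.ne']
  have hexp : ‖x - y‖ ^ 2 = ‖x‖ ^ 2 - 2 * ⟪x, y⟫ + ‖y‖ ^ 2 := norm_sub_sq_real x y
  have hin : ⟪x, x - y⟫ = ‖x‖ ^ 2 - ⟪x, y⟫ := by
    rw [inner_sub_right, real_inner_self_eq_norm_sq]
  have hsq : ‖x‖ ^ 2 = ‖y‖ ^ 2 := by rw [h]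
  linarith

lemma F_swap {x y : E m} (h : ‖x‖ = ‖y‖) (hxy : x ≠ y) : F x y = F y x := by
  rw [F_eq_one h hxy, F_eq_one h.symm hxy.symm]

lemma F_smul {x y : E m} (c : ℝ) (hc : c ≠ 0) (hxy : x ≠ y) :
    F (c • x) (c • y) = F x y := by
  have hd := (normsq_sub_pos hxy).ne'
  rw [F, F, ← smul_sub, real_inner_smul_left, real_inner_smul_right, norm_smul, mul_pow,
    Real.norm_eq_abs, sq_abs]
  have hc2 : c ^ 2 ≠ 0 := pow_ne_zero _ hc
  field_simp

/-! ### `mustar`, `bpt` -/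

def mustar (p : ↥(PConf m 2)) : ℝ :=
  if ‖P1 p‖ ≤ ‖P0 p‖ then F (P0 p) (P1 p) else F (P1 p) (P0 p)

lemma mustar_ge_one (p : ↥(PConf m 2)) : 1 ≤ mustar p := by
  unfold mustar
  split
  · exact F_ge_one ‹_› (Pne p)
  · exact F_ge_one ((not_le.1 ‹_›).le) (Pne p).symm

def bpt (p : ↥(PConf m 2)) : E m :=
  if ‖P1 p‖ ≤ ‖P0 p‖ then (Mx p)⁻¹ • P0 p else (Mx p)⁻¹ • P1 p

lemma norm_bpt (p : ↥(PConf m 2)) : ‖bpt p‖ = 1 := by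
  unfold bpt
  split
  · rw [norm_smul, Real.norm_eq_abs, abs_of_pos (inv_pos.2 (Mx_pos p)),
      show Mx p = ‖P0 p‖ from max_eq_left ‹_›]
    have h0 : ‖P0 p‖ ≠ 0 := by
      rw [← show Mx p = ‖P0 p‖ from max_eq_left ‹_›]; exact Mx_ne p
    field_simp
  · rw [norm_smul, Real.norm_eq_abs, abs_of_pos (inv_pos.2 (Mx_pos p)),
      show Mx p = ‖P1 p‖ from max_eq_right ((not_le.1 ‹_›).le)]
    have h0 : ‖P1 p‖ ≠ 0 := by
      rw [← show Mx p = ‖P1 p‖ from max_eq_right ((not_le.1 ‹_›).le)]; exact Mx_ne p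
    field_simp

/-! ### Time weights -/

def wA (τ : ℝ) : ℝ := min (max (3 * τ) 0) 1
def wB (τ : ℝ) : ℝ := min (max (3 * τ - 1) 0) 1
def wC (τ : ℝ) : ℝ := min (max (3 * τ - 2) 0) 1

lemma clamp_nonneg (a : ℝ) : 0 ≤ min (max a 0) 1 :=
  le_min (le_max_right _ _) one_pos.le

lemma clamp_le_one (a : ℝ) : min (max a 0) 1 ≤ 1 := min_le_right _ _

lemma wA_nonneg (τ : ℝ) : 0 ≤ wA τ := clamp_nonneg _
lemma wA_le_one (τ : ℝ) : wA τ ≤ 1 := clamp_le_one _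
lemma wB_nonneg (τ : ℝ) : 0 ≤ wB τ := clamp_nonneg _
lemma wB_le_one (τ : ℝ) : wB τ ≤ 1 := clamp_le_one _
lemma wC_nonneg (τ : ℝ) : 0 ≤ wC τ := clamp_nonneg _
lemma wC_le_one (τ : ℝ) : wC τ ≤ 1 := clamp_le_one _

lemma wA_eq_one_of_wB_pos {τ : ℝ} (h : 0 < wB τ) : wA τ = 1 := by
  have h1 : 0 < max (3 * τ - 1) 0 := lt_min_iff.1 h |>.1
  have h2 : 0 < 3 * τ - 1 := by
    by_contra hc
    push_neg at hc
    rw [max_eq_right hc] at h1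
    exact lt_irrefl 0 h1
  have h3 : (1 : ℝ) ≤ max (3 * τ) 0 := le_max_of_le_left (by linarith)
  exact min_eq_right h3

lemma wB_eq_one_of_wC_pos {τ : ℝ} (h : 0 < wC τ) : wB τ = 1 := by
  have h1 : 0 < max (3 * τ - 2) 0 := lt_min_iff.1 h |>.1
  have h2 : 0 < 3 * τ - 2 := by
    by_contra hc
    push_neg at hc
    rw [max_eq_right hc] at h1
    exact lt_irrefl 0 h1
  have h3 : (1 : ℝ) ≤ max (3 * τ - 1) 0 := le_max_of_le_left (by linarith)
  exact min_eq_right h3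

lemma wA_zero : wA 0 = 0 := by norm_num [wA]
lemma wB_zero : wB 0 = 0 := by norm_num [wB]
lemma wC_zero : wC 0 = 0 := by norm_num [wC]
lemma wC_one : wC 1 = 1 := by norm_num [wC]

/-! ### The affine conjugating family `psi` -/

def lam (p : ↥(PConf m 2)) (τ : ℝ) : ℝ := 1 - wA τ + wA τ * (Mx p)⁻¹
def mu (p : ↥(PConf m 2)) (τ : ℝ) : ℝ := 1 + wB τ * (mustar p - 1)
def aa (p : ↥(PConf m 2)) (τ : ℝ) : ℝ := mu p τ * lam p τ
def bb (p : ↥(PConf m 2)) (τ : ℝ) : E m := (1 - mu p τ) • bpt p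
def psi (p : ↥(PConf m 2)) (τ : ℝ) (x : E m) : E m := aa p τ • x + bb p τ

lemma one_le_lam (p : ↥(PConf m 2)) (τ : ℝ) : 1 ≤ lam p τ := by
  have h1 := one_le_invMx p
  have h2 := wA_nonneg τ
  have h3 := wA_le_one τ
  unfold lam
  nlinarith

lemma one_le_mu (p : ↥(PConf m 2)) (τ : ℝ) : 1 ≤ mu p τ := by
  have h1 := mustar_ge_one p
  have h2 := wB_nonneg τ
  unfold mu
  nlinarith

lemma mu_le_mustar (p : ↥(PConf m 2)) (τ : ℝ) : mu p τ ≤ mustar p := by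
  have h1 := mustar_ge_one p
  have h2 := wB_le_one τ
  have h3 := wB_nonneg τ
  unfold mu
  nlinarith

lemma one_le_aa (p : ↥(PConf m 2)) (τ : ℝ) : 1 ≤ aa p τ := by
  have h1 := one_le_lam p τ
  have h2 := one_le_mu p τ
  unfold aa
  nlinarith

lemma aa_ne (p : ↥(PConf m 2)) (τ : ℝ) : aa p τ ≠ 0 := by
  have := one_le_aa p τ; intro h; rw [h] at this; linarith

lemma psi_injective (p : ↥(PConf m 2)) (τ : ℝ) : Function.Injective (psi p τ) := by
  intro x y h
  unfold psi at h
  have h2 : aa p τ • x = aa p τ • y := by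
    have := add_right_cancel h
    exact this
  exact smul_right_injective (E m) (aa_ne p τ) h2

lemma mid_smul (x y : E m) : midpoint ℝ x y = (2 : ℝ)⁻¹ • (x + y) :=
  midpoint_eq_smul_add ℝ x y

lemma psi_mid (p : ↥(PConf m 2)) (τ : ℝ) (x y : E m) :
    psi p τ (midpoint ℝ x y) = midpoint ℝ (psi p τ x) (psi p τ y) := by
  unfold psi
  rw [mid_smul, mid_smul]
  module

/-! ### The quadratic estimate -/

lemma quad_eq (y x : E m) (μ : ℝ) :
    ‖y + μ • (x - y)‖ ^ 2 = ‖y‖ ^ 2 + μ * (2 * ⟪y, x - y⟫ + μ * ‖x - y‖ ^ 2) := by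
  have h1 : ⟪y, μ • (x - y)⟫ = μ * ⟪y, x - y⟫ := real_inner_smul_right _ _ _
  have h2 : ‖μ • (x - y)‖ ^ 2 = μ ^ 2 * ‖x - y‖ ^ 2 := by
    rw [norm_smul, mul_pow, Real.norm_eq_abs, sq_abs]
  rw [norm_add_sq_real, h1, h2]
  ring

lemma inner_flip (y x : E m) : ⟪y, x - y⟫ = -⟪y, y - x⟫ := by
  rw [inner_sub_right, inner_sub_right]; ring

lemma norm_comb_le {y x : E m} (hy : ‖y‖ = 1) (hxy : x ≠ y) {μ : ℝ} (h0 : 0 ≤ μ)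
    (hμ : μ ≤ F y x) : ‖y + μ • (x - y)‖ ≤ 1 := by
  have hd := normsq_sub_pos (Ne.symm hxy)
  have hb : μ * ‖y - x‖ ^ 2 ≤ 2 * ⟪y, y - x⟫ := by
    rw [F] at hμ
    exact (le_div_iff₀ hd).1 hμ
  have hq := quad_eq y x μ
  rw [inner_flip, hy] at hq
  have hnn : ‖x - y‖ = ‖y - x‖ := norm_sub_rev _ _
  rw [hnn] at hq
  have hle : ‖y + μ • (x - y)‖ ^ 2 ≤ 1 := by nlinarith
  nlinarith [norm_nonneg (y + μ • (x - y))]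

lemma norm_comb_eq {y x : E m} (hy : ‖y‖ = 1) (hxy : x ≠ y) :
    ‖y + F y x • (x - y)‖ = 1 := by
  have hd := normsq_sub_pos (Ne.symm hxy)
  have hq := quad_eq y x (F y x)
  rw [inner_flip, hy] at hq
  have hnn : ‖x - y‖ = ‖y - x‖ := norm_sub_rev _ _
  rw [hnn] at hq
  have hFd : F y x * ‖y - x‖ ^ 2 = 2 * ⟪y, y - x⟫ := by
    rw [F]; exact div_mul_cancel₀ _ hd.ne'
  have hsq : ‖y + F y x • (x - y)‖ ^ 2 = 1 := by
    rw [hq, hFd]; ring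
  have h3 : (‖y + F y x • (x - y)‖ - 1) * (‖y + F y x • (x - y)‖ + 1) = 0 := by
    nlinarith
  rcases mul_eq_zero.1 h3 with h | h
  · linarith
  · nlinarith [norm_nonneg (y + F y x • (x - y))]

/-! ### Containment of the moved configuration -/

lemma psi_eq_of_wA_one (p : ↥(PConf m 2)) {τ : ℝ} (hA : wA τ = 1) (x : E m) :
    psi p τ x = bpt p + mu p τ • ((Mx p)⁻¹ • x - bpt p) := by
  have hl : lam p τ = (Mx p)⁻¹ := by rw [lam, hA]; ring
  unfold psi aa bb
  rw [hl]
  module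

lemma psi_coord_norm_le (p : ↥(PConf m 2)) (τ : ℝ) (i : Fin 2) :
    ‖psi p τ ((p : Fin 2 → E m) i)‖ ≤ 1 := by
  rcases eq_or_lt_of_le (wB_nonneg τ) with hB | hB
  · -- μ = 1, β = 0, pure contraction
    have hmu : mu p τ = 1 := by rw [mu, ← hB]; ring
    have hbb : bb p τ = 0 := by rw [bb, hmu]; simp
    have : psi p τ ((p : Fin 2 → E m) i) = lam p τ • (p : Fin 2 → E m) i := by
      rw [psi, hbb, aa, hmu, one_mul, add_zero]
    rw [this, norm_smul, Real.norm_eq_abs, abs_of_pos (lt_of_lt_of_le one_pos (one_le_lam p τ))]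
    have hle : ‖(p : Fin 2 → E m) i‖ ≤ Mx p := by
      fin_cases i
      · exact le_max_left _ _
      · exact le_max_right _ _
    have hlM : lam p τ * Mx p ≤ 1 := by
      have h1 := Mx_pos p
      have h2 := Mx_le_one p
      have h3 := wA_nonneg τ
      have h4 := wA_le_one τ
      have h5 : Mx p * (Mx p)⁻¹ = 1 := mul_inv_cancel₀ (Mx_ne p)
      unfold lam
      nlinarith
    have h1 := one_le_lam p τ
    nlinarith [norm_nonneg ((p : Fin 2 → E m) i)]
  · -- wB > 0, so wA = 1
    have hA : wA τ = 1 := wA_eq_one_of_wB_pos hB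
    rw [psi_eq_of_wA_one p hA]
    have hMinv : (Mx p)⁻¹ ≠ 0 := inv_ne_zero (Mx_ne p)
    by_cases hbr : ‖P1 p‖ ≤ ‖P0 p‖
    · have hb : bpt p = (Mx p)⁻¹ • P0 p := if_pos hbr
      fin_cases i
      · show ‖bpt p + mu p τ • ((Mx p)⁻¹ • P0 p - bpt p)‖ ≤ 1
        rw [hb, sub_self, smul_zero, add_zero, ← hb, norm_bpt]
      · show ‖bpt p + mu p τ • ((Mx p)⁻¹ • P1 p - bpt p)‖ ≤ 1
        have hxy : (Mx p)⁻¹ • P1 p ≠ bpt p := by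
          rw [hb]
          intro hc
          exact (Pne p).symm (smul_right_injective (E m) hMinv hc)
        apply norm_comb_le (norm_bpt p) hxy (le_trans zero_le_one (one_le_mu p τ))
        have hFeq : F (bpt p) ((Mx p)⁻¹ • P1 p) = F (P0 p) (P1 p) := by
          rw [hb]; exact F_smul _ hMinv (Pne p)
        rw [hFeq, ← if_pos (c := ‖P1 p‖ ≤ ‖P0 p‖) hbr
          (t := F (P0 p) (P1 p)) (e := F (P1 p) (P0 p))]
        exact mu_le_mustar p τ
    · have hb : bpt p = (Mx p)⁻¹ • P1 p := if_neg hbr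
      fin_cases i
      · show ‖bpt p + mu p τ • ((Mx p)⁻¹ • P0 p - bpt p)‖ ≤ 1
        have hxy : (Mx p)⁻¹ • P0 p ≠ bpt p := by
          rw [hb]
          intro hc
          exact (Pne p) (smul_right_injective (E m) hMinv hc)
        apply norm_comb_le (norm_bpt p) hxy (le_trans zero_le_one (one_le_mu p τ))
        have hFeq : F (bpt p) ((Mx p)⁻¹ • P0 p) = F (P1 p) (P0 p) := by
          rw [hb]; exact F_smul _ hMinv (Pne p).symm
        rw [hFeq, ← if_neg (c := ‖P1 p‖ ≤ ‖P0 p‖) hbr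
          (t := F (P0 p) (P1 p)) (e := F (P1 p) (P0 p))]
        exact mu_le_mustar p τ
      · show ‖bpt p + mu p τ • ((Mx p)⁻¹ • P1 p - bpt p)‖ ≤ 1
        rw [hb, sub_self, smul_zero, add_zero, ← hb, norm_bpt]

lemma psi_coord_norm_eq (p : ↥(PConf m 2)) {τ : ℝ} (hB1 : wB τ = 1) (i : Fin 2) :
    ‖psi p τ ((p : Fin 2 → E m) i)‖ = 1 := by
  have hA : wA τ = 1 := wA_eq_one_of_wB_pos (by rw [hB1]; norm_num)
  have hmu : mu p τ = mustar p := by rw [mu, hB1]; ring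
  rw [psi_eq_of_wA_one p hA]
  have hMinv : (Mx p)⁻¹ ≠ 0 := inv_ne_zero (Mx_ne p)
  by_cases hbr : ‖P1 p‖ ≤ ‖P0 p‖
  · have hb : bpt p = (Mx p)⁻¹ • P0 p := if_pos hbr
    fin_cases i
    · show ‖bpt p + mu p τ • ((Mx p)⁻¹ • P0 p - bpt p)‖ = 1
      rw [hb, sub_self, smul_zero, add_zero, ← hb, norm_bpt]
    · show ‖bpt p + mu p τ • ((Mx p)⁻¹ • P1 p - bpt p)‖ = 1
      have hxy : (Mx p)⁻¹ • P1 p ≠ bpt p := by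
        rw [hb]; intro hc
        exact (Pne p).symm (smul_right_injective (E m) hMinv hc)
      have hFeq : F (bpt p) ((Mx p)⁻¹ • P1 p) = F (P0 p) (P1 p) := by
        rw [hb]; exact F_smul _ hMinv (Pne p)
      have hmu2 : mu p τ = F (bpt p) ((Mx p)⁻¹ • P1 p) := by
        rw [hFeq, hmu, mustar, if_pos hbr]
      rw [hmu2]
      exact norm_comb_eq (norm_bpt p) hxy
  · have hb : bpt p = (Mx p)⁻¹ • P1 p := if_neg hbr
    fin_cases i
    · show ‖bpt p + mu p τ • ((Mx p)⁻¹ • P0 p - bpt p)‖ = 1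
      have hxy : (Mx p)⁻¹ • P0 p ≠ bpt p := by
        rw [hb]; intro hc
        exact (Pne p) (smul_right_injective (E m) hMinv hc)
      have hFeq : F (bpt p) ((Mx p)⁻¹ • P0 p) = F (P1 p) (P0 p) := by
        rw [hb]; exact F_smul _ hMinv (Pne p).symm
      have hmu2 : mu p τ = F (bpt p) ((Mx p)⁻¹ • P0 p) := by
        rw [hFeq, hmu, mustar, if_neg hbr]
      rw [hmu2]
      exact norm_comb_eq (norm_bpt p) hxy
    · show ‖bpt p + mu p τ • ((Mx p)⁻¹ • P1 p - bpt p)‖ = 1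
      rw [hb, sub_self, smul_zero, add_zero, ← hb, norm_bpt]

/-! ### The moved configuration -/

lemma cfg_mem (p : ↥(PConf m 2)) (τ : ℝ) :
    (fun i : Fin 2 => psi p τ ((p : Fin 2 → E m) i)) ∈ PConf m 2 := by
  constructor
  · intro i
    simp only [Dball, Metric.mem_closedBall, dist_zero_right]
    exact psi_coord_norm_le p τ i
  · exact fun i j h => p.2.2 (psi_injective p τ h)

def cfg (p : ↥(PConf m 2)) (τ : ℝ) : ↥(PConf m 2) :=
  ⟨fun i => psi p τ ((p : Fin 2 → E m) i), cfg_mem p τ⟩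

/-! ### Strict convexity helper -/

lemma midpoint_norm_lt {x y : E m} (hx : ‖x‖ ≤ 1) (hy : ‖y‖ ≤ 1) (hxy : x ≠ y) :
    ‖midpoint ℝ x y‖ < 1 := by
  have hin : ⟪x, y⟫ < 1 := by
    by_contra hc
    push_neg at hc
    have hcs : ⟪x, y⟫ ≤ ‖x‖ * ‖y‖ := real_inner_le_norm x y
    have hx1 : ‖x‖ = 1 := by nlinarith [norm_nonneg x, norm_nonneg y]
    have hy1 : ‖y‖ = 1 := by nlinarith [norm_nonneg x, norm_nonneg y]
    have heq : ⟪x, y⟫ = ‖x‖ * ‖y‖ := by rw [hx1, hy1]; nlinarith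
    have := inner_eq_norm_mul_iff_real.1 heq
    rw [hx1, hy1, one_smul, one_smul] at this
    exact hxy this
  rw [mid_smul]
  have h2 : ‖(2 : ℝ)⁻¹ • (x + y)‖ ^ 2 < 1 := by
    rw [norm_smul, mul_pow, Real.norm_eq_abs, sq_abs, norm_add_sq_real]
    have hx2 : ‖x‖ ^ 2 ≤ 1 := by nlinarith [norm_nonneg x]
    have hy2 : ‖y‖ ^ 2 ≤ 1 := by nlinarith [norm_nonneg y]
    nlinarith
  nlinarith [norm_nonneg ((2 : ℝ)⁻¹ • (x + y))]

end MidSecAux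

open MidSecAux

section Main

open scoped RealInnerProductSpace

variable {m : ℕ} (s : ↥(PConf m 2) → ↥(PConf m 3))

def Vv (p : ↥(PConf m 2)) (τ : ℝ) : E m := ((s (cfg p τ)) : Fin 3 → E m) 0

def midp (p : ↥(PConf m 2)) : E m := midpoint ℝ (P0 p) (P1 p)

def yv (p : ↥(PConf m 2)) (τ : ℝ) : E m :=
  (1 - wC τ) • Vv s p τ + wC τ • psi p τ (midp p)

def H0 (p : ↥(PConf m 2)) (τ : ℝ) : E m := (aa p τ)⁻¹ • (yv s p τ - bb p τ)

lemma psi_H0 (p : ↥(PConf m 2)) (τ : ℝ) : psi p τ (H0 s p τ) = yv s p τ := by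
  unfold psi H0
  rw [smul_inv_smul₀ (aa_ne p τ), sub_add_cancel]

lemma norm_Vv_le (p : ↥(PConf m 2)) (τ : ℝ) : ‖Vv s p τ‖ ≤ 1 := by
  have := (s (cfg p τ)).2.1 0
  simpa [Vv, Dball, Metric.mem_closedBall, dist_zero_right] using this

lemma psimid_eq (p : ↥(PConf m 2)) (τ : ℝ) :
    psi p τ (midp p) = midpoint ℝ (psi p τ (P0 p)) (psi p τ (P1 p)) :=
  psi_mid p τ _ _

lemma norm_psimid_le (p : ↥(PConf m 2)) (τ : ℝ) : ‖psi p τ (midp p)‖ ≤ 1 := by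
  rw [psimid_eq, mid_smul]
  have h0 : ‖psi p τ (P0 p)‖ ≤ 1 := psi_coord_norm_le p τ 0
  have h1 : ‖psi p τ (P1 p)‖ ≤ 1 := psi_coord_norm_le p τ 1
  rw [norm_smul, Real.norm_eq_abs]
  have := norm_add_le (psi p τ (P0 p)) (psi p τ (P1 p))
  rw [abs_of_pos (by norm_num : (0:ℝ) < (2:ℝ)⁻¹)]
  nlinarith

lemma norm_psimid_lt (p : ↥(PConf m 2)) (τ : ℝ) : ‖psi p τ (midp p)‖ < 1 := by
  rw [psimid_eq]
  exact midpoint_norm_lt (psi_coord_norm_le p τ 0) (psi_coord_norm_le p τ 1)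
    (fun h => Pne p (psi_injective p τ h))

lemma norm_yv_le (p : ↥(PConf m 2)) (τ : ℝ) : ‖yv s p τ‖ ≤ 1 := by
  unfold yv
  have h1 := norm_Vv_le s p τ
  have h2 := norm_psimid_le p τ
  have h3 := wC_nonneg τ
  have h4 := wC_le_one τ
  calc ‖(1 - wC τ) • Vv s p τ + wC τ • psi p τ (midp p)‖
      ≤ ‖(1 - wC τ) • Vv s p τ‖ + ‖wC τ • psi p τ (midp p)‖ := norm_add_le _ _
    _ = (1 - wC τ) * ‖Vv s p τ‖ + wC τ * ‖psi p τ (midp p)‖ := by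
        rw [norm_smul, norm_smul, Real.norm_eq_abs, Real.norm_eq_abs, abs_of_nonneg (by linarith), abs_of_nonneg h3]
    _ ≤ 1 := by nlinarith

lemma norm_H0_le (p : ↥(PConf m 2)) (τ : ℝ) : ‖H0 s p τ‖ ≤ 1 := by
  unfold H0
  have haa := one_le_aa p τ
  have hmu := one_le_mu p τ
  have hlam := one_le_lam p τ
  have hbbn : ‖bb p τ‖ = mu p τ - 1 := by
    rw [bb, norm_smul, norm_bpt, mul_one, Real.norm_eq_abs, abs_of_nonpos (by linarith)]
    ring
  have hsub : ‖yv s p τ - bb p τ‖ ≤ mu p τ := by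
    have := norm_sub_le (yv s p τ) (bb p τ)
    have hy := norm_yv_le s p τ
    rw [hbbn] at this
    linarith
  rw [norm_smul, Real.norm_eq_abs, abs_of_pos (inv_pos.2 (lt_of_lt_of_le one_pos haa))]
  have key : (aa p τ)⁻¹ * mu p τ ≤ 1 := by
    rw [aa, mul_inv]
    have h5 : (mu p τ)⁻¹ * mu p τ = 1 := inv_mul_cancel₀ (by linarith)
    have h6 : (lam p τ)⁻¹ ≤ 1 := inv_le_one_of_one_le₀ hlam
    have h7 : (0:ℝ) < (lam p τ)⁻¹ := inv_pos.2 (by linarith)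
    nlinarith
  have h8 : (0:ℝ) ≤ (aa p τ)⁻¹ := inv_nonneg.2 (by linarith)
  nlinarith

lemma H0_ne (hsec : ∀ p : ↥(PConf m 2), (s p : Fin 3 → E m) ∘ Fin.succ = (p : Fin 2 → E m))
    (p : ↥(PConf m 2)) (τ : ℝ) (i : Fin 2) : H0 s p τ ≠ (p : Fin 2 → E m) i := by
  intro h
  have hy : yv s p τ = psi p τ ((p : Fin 2 → E m) i) := by rw [← psi_H0 s p τ, h]
  rcases eq_or_lt_of_le (wC_nonneg τ) with hC | hC
  · -- wC = 0 : the value is a configuration point of s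
    have hyv : yv s p τ = Vv s p τ := by rw [yv, ← hC]; simp
    have hcoord : ((s (cfg p τ)) : Fin 3 → E m) (Fin.succ i) = psi p τ ((p : Fin 2 → E m) i) :=
      congrFun (hsec (cfg p τ)) i
    have heq : ((s (cfg p τ)) : Fin 3 → E m) 0 = ((s (cfg p τ)) : Fin 3 → E m) (Fin.succ i) := by
      rw [hcoord, ← hy, hyv]; rfl
    have := (s (cfg p τ)).2.2 heq
    exact (Fin.succ_ne_zero i) this.symm
  · -- wC > 0 : the value is strictly inside the ball, the configuration is on the sphere
    have hB1 : wB τ = 1 := wB_eq_one_of_wC_pos hC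
    have hsph : ‖psi p τ ((p : Fin 2 → E m) i)‖ = 1 := psi_coord_norm_eq p hB1 i
    have hlt : ‖yv s p τ‖ < 1 := by
      unfold yv
      have h1 := norm_Vv_le s p τ
      have h2 := norm_psimid_lt p τ
      have h4 := wC_le_one τ
      calc ‖(1 - wC τ) • Vv s p τ + wC τ • psi p τ (midp p)‖
          ≤ ‖(1 - wC τ) • Vv s p τ‖ + ‖wC τ • psi p τ (midp p)‖ := norm_add_le _ _
        _ = (1 - wC τ) * ‖Vv s p τ‖ + wC τ * ‖psi p τ (midp p)‖ := by
            rw [norm_smul, norm_smul, Real.norm_eq_abs, Real.norm_eq_abs, abs_of_nonneg (by linarith), abs_of_nonneg (by linarith)]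
        _ < 1 := by nlinarith
    rw [hy, hsph] at hlt
    exact lt_irrefl _ hlt

lemma H_mem (hsec : ∀ p : ↥(PConf m 2), (s p : Fin 3 → E m) ∘ Fin.succ = (p : Fin 2 → E m))
    (p : ↥(PConf m 2)) (τ : ℝ) :
    Fin.cons (H0 s p τ) (p : Fin 2 → E m) ∈ PConf m 3 := by
  constructor
  · intro i
    refine Fin.cases ?_ ?_ i
    · simp only [Fin.cons_zero]
      simp only [Dball, Metric.mem_closedBall, dist_zero_right]
      exact norm_H0_le s p τ
    · intro j
      simp only [Fin.cons_succ]
      exact p.2.1 j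
  · intro i j h
    rcases Fin.eq_zero_or_eq_succ i with rfl | ⟨i', rfl⟩ <;>
      rcases Fin.eq_zero_or_eq_succ j with rfl | ⟨j', rfl⟩
    · rfl
    · rw [Fin.cons_zero, Fin.cons_succ] at h
      exact absurd h (H0_ne s hsec p τ _)
    · rw [Fin.cons_succ, Fin.cons_zero] at h
      exact absurd h.symm (H0_ne s hsec p τ _)
    · rw [Fin.cons_succ, Fin.cons_succ] at h
      exact congrArg Fin.succ (p.2.2 h)


/-! ### Equivariance -/

lemma P0_swap (p : ↥(PConf m 2)) : P0 (swap2 m p) = P1 p := by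
  show (p : Fin 2 → E m) (Equiv.swap 0 1 0) = (p : Fin 2 → E m) 1
  rw [Equiv.swap_apply_left]

lemma P1_swap (p : ↥(PConf m 2)) : P1 (swap2 m p) = P0 p := by
  show (p : Fin 2 → E m) (Equiv.swap 0 1 1) = (p : Fin 2 → E m) 0
  rw [Equiv.swap_apply_right]

lemma Mx_swap (p : ↥(PConf m 2)) : Mx (swap2 m p) = Mx p := by
  unfold Mx; rw [P0_swap, P1_swap, max_comm]

lemma mustar_swap (p : ↥(PConf m 2)) : mustar (swap2 m p) = mustar p := by
  unfold mustar
  rw [P0_swap, P1_swap]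
  rcases le_or_gt ‖P0 p‖ ‖P1 p‖ with h | h
  · rw [if_pos h]
    by_cases h' : ‖P1 p‖ ≤ ‖P0 p‖
    · rw [if_pos h']
      exact F_swap (le_antisymm h' h) (Pne p).symm
    · rw [if_neg h']
  · rw [if_neg (not_le.2 h), if_pos h.le]

lemma lam_swap (p : ↥(PConf m 2)) (τ : ℝ) : lam (swap2 m p) τ = lam p τ := by
  unfold lam; rw [Mx_swap]

lemma mu_swap (p : ↥(PConf m 2)) (τ : ℝ) : mu (swap2 m p) τ = mu p τ := by
  unfold mu; rw [mustar_swap]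

lemma aa_swap (p : ↥(PConf m 2)) (τ : ℝ) : aa (swap2 m p) τ = aa p τ := by
  unfold aa; rw [mu_swap, lam_swap]

lemma bb_swap (p : ↥(PConf m 2)) (τ : ℝ) : bb (swap2 m p) τ = bb p τ := by
  unfold bb bpt
  rw [mu_swap, Mx_swap, P0_swap, P1_swap]
  rcases le_or_gt ‖P0 p‖ ‖P1 p‖ with h | h
  · rw [if_pos h]
    by_cases h' : ‖P1 p‖ ≤ ‖P0 p‖
    · rw [if_pos h']
      have he : ‖P0 p‖ = ‖P1 p‖ := le_antisymm h h'
      have hmu : mu p τ = 1 := by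
        rw [mu, mustar, if_pos h', F_eq_one he (Pne p)]; ring
      rw [hmu]; simp
    · rw [if_neg h']
  · rw [if_neg (not_le.2 h), if_pos h.le]

lemma psi_swap (p : ↥(PConf m 2)) (τ : ℝ) (x : E m) :
    psi (swap2 m p) τ x = psi p τ x := by
  unfold psi; rw [aa_swap, bb_swap]

lemma cfg_swap (p : ↥(PConf m 2)) (τ : ℝ) : cfg (swap2 m p) τ = swap2 m (cfg p τ) := by
  apply Subtype.ext
  funext i
  show psi (swap2 m p) τ (((swap2 m p) : Fin 2 → E m) i)
      = (cfg p τ : Fin 2 → E m) (Equiv.swap 0 1 i)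
  rw [psi_swap]
  rfl

lemma midp_swap (p : ↥(PConf m 2)) : midp (swap2 m p) = midp p := by
  unfold midp; rw [P0_swap, P1_swap, midpoint_comm]

section Equiv

variable {m : ℕ} (s : ↥(PConf m 2) → ↥(PConf m 3))

lemma Vv_swap (hequiv : ∀ p, s (swap2 m p) = swap3 m (s p))
    (p : ↥(PConf m 2)) (τ : ℝ) : Vv s (swap2 m p) τ = Vv s p τ := by
  unfold Vv
  rw [cfg_swap, hequiv]
  show ((s (cfg p τ)) : Fin 3 → E m) (Equiv.swap 1 2 0) = ((s (cfg p τ)) : Fin 3 → E m) 0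
  rw [Equiv.swap_apply_of_ne_of_ne (by decide) (by decide)]

lemma H0_swap (hequiv : ∀ p, s (swap2 m p) = swap3 m (s p))
    (p : ↥(PConf m 2)) (τ : ℝ) : H0 s (swap2 m p) τ = H0 s p τ := by
  unfold H0 yv
  rw [aa_swap, bb_swap, Vv_swap s hequiv p τ, psi_swap, midp_swap]

end Equiv

/-! ### Endpoints -/

lemma aa_zero (p : ↥(PConf m 2)) : aa p 0 = 1 := by
  unfold aa lam mu; rw [wA_zero, wB_zero]; ring

lemma bb_zero (p : ↥(PConf m 2)) : bb p 0 = 0 := by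
  unfold bb mu; rw [wB_zero]; norm_num

lemma psi_zero (p : ↥(PConf m 2)) (x : E m) : psi p 0 x = x := by
  unfold psi; rw [aa_zero, bb_zero, one_smul, add_zero]

lemma cfg_zero (p : ↥(PConf m 2)) : cfg p 0 = p :=
  Subtype.ext (funext fun i => psi_zero p _)

lemma H0_zero (s : ↥(PConf m 2) → ↥(PConf m 3)) (p : ↥(PConf m 2)) :
    H0 s p 0 = ((s p) : Fin 3 → E m) 0 := by
  unfold H0 yv Vv
  rw [wC_zero, aa_zero, bb_zero, cfg_zero]
  simp

lemma H0_one (s : ↥(PConf m 2) → ↥(PConf m 3)) (p : ↥(PConf m 2)) :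
    H0 s p 1 = midp p := by
  unfold H0 yv
  rw [wC_one]
  have h1 : ((1:ℝ) - 1) • Vv s p 1 + (1:ℝ) • psi p 1 (midp p) - bb p 1
      = aa p 1 • midp p := by
    rw [psi]; module
  rw [h1, inv_smul_smul₀ (aa_ne p 1)]

/-! ### Continuity -/

lemma H0_continuous (s : ↥(PConf m 2) → ↥(PConf m 3)) (hcont : Continuous s) :
    Continuous (fun z : ↥(PConf m 2) × I => H0 s z.1 (z.2 : ℝ)) := by
  have hval : Continuous (fun z : ↥(PConf m 2) × I => (z.1 : Fin 2 → E m)) :=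
    continuous_subtype_val.comp continuous_fst
  have hp0 : Continuous (fun z : ↥(PConf m 2) × I => P0 z.1) :=
    (continuous_apply (0 : Fin 2)).comp hval
  have hp1 : Continuous (fun z : ↥(PConf m 2) × I => P1 z.1) :=
    (continuous_apply (1 : Fin 2)).comp hval
  have hτ : Continuous (fun z : ↥(PConf m 2) × I => (z.2 : ℝ)) :=
    continuous_subtype_val.comp continuous_snd
  have hMx : Continuous (fun z : ↥(PConf m 2) × I => Mx z.1) := hp0.norm.max hp1.norm
  have hMxinv : Continuous (fun z : ↥(PConf m 2) × I => (Mx z.1)⁻¹) :=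
    hMx.inv₀ fun z => Mx_ne z.1
  have hF01 : Continuous (fun z : ↥(PConf m 2) × I => F (P0 z.1) (P1 z.1)) := by
    apply Continuous.div
    · exact continuous_const.mul (hp0.inner (hp0.sub hp1))
    · exact (hp0.sub hp1).norm.pow 2
    · exact fun z => pow_ne_zero _ (norm_ne_zero_iff.2 (sub_ne_zero.2 (Pne z.1)))
  have hF10 : Continuous (fun z : ↥(PConf m 2) × I => F (P1 z.1) (P0 z.1)) := by
    apply Continuous.div
    · exact continuous_const.mul (hp1.inner (hp1.sub hp0))
    · exact (hp1.sub hp0).norm.pow 2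
    · exact fun z => pow_ne_zero _ (norm_ne_zero_iff.2 (sub_ne_zero.2 (Pne z.1).symm))
  have hmustar : Continuous (fun z : ↥(PConf m 2) × I => mustar z.1) := by
    unfold mustar
    exact Continuous.if_le hF01 hF10 hp1.norm hp0.norm
      fun z hz => by rw [F_swap hz.symm (Pne z.1)]
  have hwA : Continuous (fun z : ↥(PConf m 2) × I => wA (z.2 : ℝ)) := by
    unfold wA
    exact ((continuous_const.mul hτ).max continuous_const).min continuous_const
  have hwB : Continuous (fun z : ↥(PConf m 2) × I => wB (z.2 : ℝ)) := by
    unfold wB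
    exact (((continuous_const.mul hτ).sub continuous_const).max continuous_const).min
      continuous_const
  have hwC : Continuous (fun z : ↥(PConf m 2) × I => wC (z.2 : ℝ)) := by
    unfold wC
    exact (((continuous_const.mul hτ).sub continuous_const).max continuous_const).min
      continuous_const
  have hlam : Continuous (fun z : ↥(PConf m 2) × I => lam z.1 (z.2 : ℝ)) := by
    unfold lam
    exact (continuous_const.sub hwA).add (hwA.mul hMxinv)
  have hmu : Continuous (fun z : ↥(PConf m 2) × I => mu z.1 (z.2 : ℝ)) := by
    unfold mu
    exact continuous_const.add (hwB.mul (hmustar.sub continuous_const))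
  have haa : Continuous (fun z : ↥(PConf m 2) × I => aa z.1 (z.2 : ℝ)) := hmu.mul hlam
  have hbb : Continuous (fun z : ↥(PConf m 2) × I => bb z.1 (z.2 : ℝ)) := by
    have heq : (fun z : ↥(PConf m 2) × I => bb z.1 (z.2 : ℝ)) = fun z =>
        if ‖P1 z.1‖ ≤ ‖P0 z.1‖ then (1 - mu z.1 (z.2 : ℝ)) • ((Mx z.1)⁻¹ • P0 z.1)
        else (1 - mu z.1 (z.2 : ℝ)) • ((Mx z.1)⁻¹ • P1 z.1) := by
      funext z; unfold bb bpt; split <;> rfl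
    rw [heq]
    refine Continuous.if_le ((continuous_const.sub hmu).smul (hMxinv.smul hp0))
      ((continuous_const.sub hmu).smul (hMxinv.smul hp1)) hp1.norm hp0.norm ?_
    intro z hz
    have hmu1 : mu z.1 (z.2 : ℝ) = 1 := by
      rw [mu, mustar, if_pos (le_of_eq hz), F_eq_one hz.symm (Pne z.1)]; ring
    rw [hmu1]; simp
  have hpsi : ∀ {g : ↥(PConf m 2) × I → E m}, Continuous g →
      Continuous (fun z => psi z.1 (z.2 : ℝ) (g z)) := fun hg => (haa.smul hg).add hbb
  have hcfg : Continuous (fun z : ↥(PConf m 2) × I => cfg z.1 (z.2 : ℝ)) := by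
    refine Continuous.subtype_mk (continuous_pi fun i => ?_) _
    exact hpsi ((continuous_apply i).comp hval)
  have hVv : Continuous (fun z : ↥(PConf m 2) × I => Vv s z.1 (z.2 : ℝ)) :=
    (continuous_apply (0 : Fin 3)).comp (continuous_subtype_val.comp (hcont.comp hcfg))
  have hmid : Continuous (fun z : ↥(PConf m 2) × I => midp z.1) := by
    have heq : (fun z : ↥(PConf m 2) × I => midp z.1)
        = fun z => (2 : ℝ)⁻¹ • (P0 z.1 + P1 z.1) := by
      funext z; exact mid_smul _ _
    rw [heq]
    exact (hp0.add hp1).const_smul ((2 : ℝ)⁻¹)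
  have hyv : Continuous (fun z : ↥(PConf m 2) × I => yv s z.1 (z.2 : ℝ)) := by
    unfold yv
    exact ((continuous_const.sub hwC).smul hVv).add (hwC.smul (hpsi hmid))
  exact (haa.inv₀ fun z => aa_ne z.1 _).smul (hyv.sub hbb)

end Main

set_option maxHeartbeats 2000000 in
/-- Uniqueness for `n = 2`: every continuous section of the forgetful map
`g : PConf₃(D^m) → PConf₂(D^m)` is homotopic through sections to the midpoint
section; moreover if the section is `Σ₂`-equivariant, the homotopy may be taken
through `Σ₂`-equivariant sections. -/
theorem uniqueness_of_midpoint_section (m : ℕ) (hm : 1 ≤ m)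
    (s : ↥(PConf m 2) → ↥(PConf m 3)) (hcont : Continuous s)
    (hsec : ∀ p : ↥(PConf m 2), (s p : Fin 3 → E m) ∘ Fin.succ = (p : Fin 2 → E m)) :
    ∃ H : ↥(PConf m 2) × I → ↥(PConf m 3),
      Continuous H ∧
      (∀ p, H (p, 0) = s p) ∧
      (∀ p, (H (p, 1) : Fin 3 → E m)
        = Fin.cons (midpoint ℝ ((p : Fin 2 → E m) 0) ((p : Fin 2 → E m) 1))
            (p : Fin 2 → E m)) ∧
      (∀ p t, (H (p, t) : Fin 3 → E m) ∘ Fin.succ = (p : Fin 2 → E m)) ∧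
      ((∀ p, s (swap2 m p) = swap3 m (s p)) →
        ∀ p t, H (swap2 m p, t) = swap3 m (H (p, t))) := by
  refine ⟨fun z => ⟨Fin.cons (H0 s z.1 (z.2 : ℝ)) (z.1 : Fin 2 → E m),
    H_mem s hsec z.1 (z.2 : ℝ)⟩, ?_, ?_, ?_, ?_, ?_⟩
  · -- continuity
    refine Continuous.subtype_mk (continuous_pi fun i => ?_) _
    refine Fin.cases ?_ ?_ i
    · simpa only [Fin.cons_zero] using H0_continuous s hcont
    · intro j
      simp only [Fin.cons_succ]
      exact (continuous_apply j).comp (continuous_subtype_val.comp continuous_fst)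
  · -- t = 0
    intro p
    apply Subtype.ext
    show Fin.cons (H0 s p ((0 : I) : ℝ)) (p : Fin 2 → E m) = (s p : Fin 3 → E m)
    have hτ : ((0 : I) : ℝ) = 0 := rfl
    rw [hτ, H0_zero s p]
    funext i
    rcases Fin.eq_zero_or_eq_succ i with rfl | ⟨j, rfl⟩
    · rw [Fin.cons_zero]
    · rw [Fin.cons_succ]
      exact (congrFun (hsec p) j).symm
  · -- t = 1
    intro p
    have h : (H0 s p ((1 : I) : ℝ)) = midpoint ℝ ((p : Fin 2 → E m) 0) ((p : Fin 2 → E m) 1) :=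
      H0_one s p
    exact congrArg (fun v : E m => (Fin.cons v (p : Fin 2 → E m) : Fin 3 → E m)) h
  · -- section
    intro p t
    show (Fin.cons (H0 s p ((t : I) : ℝ)) (p : Fin 2 → E m) : Fin 3 → E m) ∘ Fin.succ
      = (p : Fin 2 → E m)
    funext i
    exact Fin.cons_succ _ _ i
  · -- equivariance
    intro hequiv p t
    apply Subtype.ext
    show Fin.cons (H0 s (swap2 m p) ((t : I) : ℝ)) ((swap2 m p) : Fin 2 → E m)
      = Fin.cons (H0 s p ((t : I) : ℝ)) (p : Fin 2 → E m) ∘ Equiv.swap 1 2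
    rw [H0_swap s hequiv]
    have hkey : (Fin.cons (H0 s p ((t : I) : ℝ)) (p : Fin 2 → E m) ∘ Equiv.swap 1 2)
        = Fin.cons (H0 s p ((t : I) : ℝ)) ((p : Fin 2 → E m) ∘ Equiv.swap 0 1) := by
      funext j
      fin_cases j <;> rfl
    rw [hkey]
    rfl
end
end
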